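/- (Schur's lemma for three-term recurrences) Let Φ_0 = 1, Φ_1(x) = a₁x + b₁, and Φ_m(x) = (a_m x + b_m) Φ_{m−1}(x) − c_m Φ_{m−2}(x) for m ≥ 2, with a_m c_m ≠ 0. If y₁, …, y_n are the roots of Φ_n, then ∏_{k=1}^n Φ_{n−1}(y_k) = (−1)^{n(n−1)/2} ∏_{k=1}^n a_k^{n−2k+1} c_k^{k−1}. -/

import Mathlib

open Polynomial

private lemma tri_aux (m : ℕ) (hm : 1 ≤ m) : (m+1)*m/2 = m + m*(m-1)/2 := by
  obtain ⟨p, rfl⟩ : ∃ p, m = p + 1 := ⟨m - 1, by omega⟩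
  have h : (p+2)*(p+1) = (p+1)*p + 2*(p+1) := by ring
  simp only [Nat.add_sub_cancel]
  rw [h, Nat.add_mul_div_left _ _ (by norm_num : 0 < 2)]
  omega

private lemma tuple_of_multiset (t : Multiset ℂ) {m : ℕ} (h : Multiset.card t = m) :
    ∃ z : Fin m → ℂ, t = ↑(List.ofFn z) := by
  have hl : t.toList.length = m := by simp [h]
  refine ⟨fun j => t.toList.get (Fin.cast hl.symm j), ?_⟩
  conv_lhs => rw [← Multiset.coe_toList t, ← List.ofFn_get t.toList]
  rw [List.ofFn_congr hl t.toList.get]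

private noncomputable def SchurA (a : ℕ → ℂ) (n : ℕ) : ℂ := ∏ k ∈ Finset.Icc 1 n, a k

private noncomputable def SchurS (a c : ℕ → ℂ) (n : ℕ) : ℂ :=
  (-1) ^ (n * (n - 1) / 2) *
    ∏ k ∈ Finset.Icc 1 n, a k ^ ((n : ℤ) - 2 * k + 1) * c k ^ (k - 1)

private lemma SchurA_ne_zero (a : ℕ → ℂ) (ha : ∀ k, 1 ≤ k → a k ≠ 0) (n : ℕ) :
    SchurA a n ≠ 0 :=
  Finset.prod_ne_zero_iff.mpr fun k hk => ha k (Finset.mem_Icc.mp hk).1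

private lemma Srec (a c : ℕ → ℂ) (ha : ∀ k, 1 ≤ k → a k ≠ 0) (m : ℕ) (hm : 1 ≤ m) :
    SchurA a (m+1) ^ m * SchurS a c (m+1)
      = SchurA a m ^ (m+1) * (-(c (m+1)))^m * SchurS a c m := by
  have hAm : SchurA a (m+1) = SchurA a m * a (m+1) := Finset.prod_Icc_succ_top (by omega) a
  have hsplit : (∏ k ∈ Finset.Icc 1 (m+1), a k ^ (((m+1 : ℕ) : ℤ) - 2 * k + 1) * c k ^ (k - 1))
      = (∏ k ∈ Finset.Icc 1 m, a k ^ (((m+1 : ℕ) : ℤ) - 2 * k + 1) * c k ^ (k - 1)) *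
        (a (m+1) ^ (((m+1 : ℕ) : ℤ) - 2 * ((m+1 : ℕ) : ℤ) + 1) * c (m+1) ^ (m + 1 - 1)) := by
    rw [Finset.prod_Icc_succ_top (by omega)]
  have hstep : ∀ k ∈ Finset.Icc 1 m,
      a k ^ (((m+1 : ℕ) : ℤ) - 2 * k + 1) * c k ^ (k - 1)
        = a k * (a k ^ (((m : ℕ) : ℤ) - 2 * k + 1) * c k ^ (k - 1)) := by
    intro k hk
    have hk1 : 1 ≤ k := (Finset.mem_Icc.mp hk).1
    have he : ((m+1 : ℕ) : ℤ) - 2 * k + 1 = (((m : ℕ) : ℤ) - 2 * k + 1) + 1 := by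
      push_cast; ring
    rw [he, zpow_add_one₀ (ha k hk1)]; ring
  have hmid : (∏ k ∈ Finset.Icc 1 m, a k ^ (((m+1 : ℕ) : ℤ) - 2 * k + 1) * c k ^ (k - 1))
      = SchurA a m * ∏ k ∈ Finset.Icc 1 m, a k ^ (((m : ℕ) : ℤ) - 2 * k + 1) * c k ^ (k - 1) := by
    rw [Finset.prod_congr rfl hstep, Finset.prod_mul_distrib, SchurA]
  have hlast : a (m+1) ^ (((m+1 : ℕ) : ℤ) - 2 * ((m+1 : ℕ) : ℤ) + 1) = (a (m+1) ^ m)⁻¹ := by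
    rw [show ((m+1 : ℕ) : ℤ) - 2 * ((m+1 : ℕ) : ℤ) + 1 = -(m : ℤ) by push_cast; ring,
      zpow_neg, zpow_natCast]
  have hsign : ((-1 : ℂ)) ^ ((m+1) * ((m+1) - 1) / 2) = (-1)^m * (-1)^(m*(m-1)/2) := by
    rw [← pow_add]
    congr 1
    simpa using tri_aux m hm
  have ham : a (m+1) ≠ 0 := ha (m+1) (by omega)
  rw [SchurS, SchurS, hsplit, hmid, hlast, hAm, hsign, neg_pow]
  have h1 : c (m+1) ^ (m + 1 - 1) = c (m+1) ^ m := by norm_num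
  rw [h1]
  field_simp
  ring

private lemma degLC (a b c : ℕ → ℂ) (Φ : ℕ → Polynomial ℂ)
    (ha : ∀ k, 1 ≤ k → a k ≠ 0)
    (h0 : Φ 0 = 1) (h1 : Φ 1 = C (a 1) * X + C (b 1))
    (hrec : ∀ m, 2 ≤ m →
      Φ m = (C (a m) * X + C (b m)) * Φ (m - 1) - C (c m) * Φ (m - 2)) :
    ∀ m, (Φ m).natDegree = m ∧ (Φ m).leadingCoeff = SchurA a m := by
  intro m
  induction m using Nat.strong_induction_on with
  | _ m IH =>
    match m with
    | 0 => simp [h0, SchurA]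
    | 1 =>
      have ha1 : a 1 ≠ 0 := ha 1 le_rfl
      constructor
      · rw [h1]; exact natDegree_linear ha1
      · rw [h1, leadingCoeff_linear ha1]; simp [SchurA]
    | (m+2) =>
      have d1 := IH (m+1) (by omega)
      have d2 := IH m (by omega)
      have ha2 : a (m+2) ≠ 0 := ha (m+2) (by omega)
      have hL : (C (a (m+2)) * X + C (b (m+2))) ≠ 0 :=
        leadingCoeff_ne_zero.mp (by rw [leadingCoeff_linear ha2]; exact ha2)
      have hΦ1 : Φ (m+1) ≠ 0 :=
        leadingCoeff_ne_zero.mp (d1.2 ▸ SchurA_ne_zero a ha (m+1))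
      have hT_deg : ((C (a (m+2)) * X + C (b (m+2))) * Φ (m+1)).natDegree = m + 2 := by
        rw [natDegree_mul hL hΦ1, natDegree_linear ha2, d1.1]; omega
      have hT_lc : ((C (a (m+2)) * X + C (b (m+2))) * Φ (m+1)).leadingCoeff
          = SchurA a (m+2) := by
        have hA2 : SchurA a (m+2) = SchurA a (m+1) * a (m+2) :=
          Finset.prod_Icc_succ_top (by omega) a
        rw [leadingCoeff_mul, leadingCoeff_linear ha2, d1.2, hA2]
        ring
      have hS_deg : (C (c (m+2)) * Φ m).natDegree ≤ m :=
        le_trans (natDegree_C_mul_le _ _) (le_of_eq d2.1)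
      have hTne : (C (a (m+2)) * X + C (b (m+2))) * Φ (m+1) ≠ 0 := mul_ne_zero hL hΦ1
      have hdeg_lt : (C (c (m+2)) * Φ m).degree
          < ((C (a (m+2)) * X + C (b (m+2))) * Φ (m+1)).degree := by
        rw [degree_eq_natDegree hTne, hT_deg]
        refine lt_of_le_of_lt (degree_le_natDegree) ?_
        exact_mod_cast (by omega : (C (c (m+2)) * Φ m).natDegree < m + 2)
      have hrw : Φ (m+2) = (C (a (m+2)) * X + C (b (m+2))) * Φ (m+1) - C (c (m+2)) * Φ m := by
        have := hrec (m+2) (by omega)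
        simpa using this
      constructor
      · rw [hrw, natDegree_sub_eq_left_of_natDegree_lt (by omega : (C (c (m+2)) * Φ m).natDegree < ((C (a (m+2)) * X + C (b (m+2))) * Φ (m+1)).natDegree), hT_deg]
      · rw [hrw, leadingCoeff_sub_of_degree_lt hdeg_lt, hT_lc]

private lemma key (a b c : ℕ → ℂ) (Φ : ℕ → Polynomial ℂ)
    (habc : ∀ k, 1 ≤ k → a k ≠ 0 ∧ c k ≠ 0)
    (h0 : Φ 0 = 1) (h1 : Φ 1 = C (a 1) * X + C (b 1))
    (hrec : ∀ m, 2 ≤ m →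
      Φ m = (C (a m) * X + C (b m)) * Φ (m - 1) - C (c m) * Φ (m - 2)) :
    ∀ n, 1 ≤ n → ∀ y : Fin n → ℂ,
      Φ n = C (SchurA a n) * ∏ i, (X - C (y i)) →
      ∏ i, (Φ (n - 1)).eval (y i) = SchurS a c n := by
  have ha : ∀ k, 1 ≤ k → a k ≠ 0 := fun k hk => (habc k hk).1
  intro n
  induction n using Nat.strong_induction_on with
  | _ n IH =>
  intro hn y hy
  obtain ⟨m, rfl⟩ : ∃ m, n = m + 1 := ⟨n - 1, by omega⟩
  rcases Nat.eq_zero_or_pos m with rfl | hm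
  · -- n = 1
    simp only [Nat.add_sub_cancel, h0, eval_one, Finset.prod_const_one, SchurS]
    norm_num [Finset.Icc_self]
  · -- n = m + 1, m ≥ 1
    show ∏ i, (Φ m).eval (y i) = SchurS a c (m+1)
    -- factor Φ m
    have hd := degLC a b c Φ ha h0 h1 hrec m
    have hΦm_ne : Φ m ≠ 0 := leadingCoeff_ne_zero.mp (hd.2 ▸ SchurA_ne_zero a ha m)
    have hfact := Splits.eq_prod_roots (IsAlgClosed.splits (Φ m))
    have hcard : Multiset.card (Φ m).roots = m := by
      rw [splits_iff_card_roots.mp (IsAlgClosed.splits (Φ m))]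
      exact hd.1
    obtain ⟨z, hz'⟩ := tuple_of_multiset _ hcard
    have hzfact : Φ m = C (SchurA a m) * ∏ j, (X - C (z j)) := by
      rw [hfact, hd.2, hz', Multiset.map_coe, List.map_ofFn, Multiset.prod_coe, Fin.prod_ofFn]
      rfl
    have heval_m : ∀ x, (Φ m).eval x = SchurA a m * ∏ j, (x - z j) := by
      intro x
      rw [hzfact]
      simp [eval_prod]
    have heval_n : ∀ x, (Φ (m+1)).eval x = SchurA a (m+1) * ∏ i, (x - y i) := by
      intro x
      rw [hy]
      simp [eval_prod]
    have hroot : ∀ j, (Φ m).eval (z j) = 0 := fun j => by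
      rw [heval_m]
      exact mul_eq_zero_of_right _ (Finset.prod_eq_zero (Finset.mem_univ j) (sub_self _))
    -- E1
    have e1 : ∏ i, (Φ m).eval (y i) = SchurA a m ^ (m+1) * ∏ i, ∏ j, (y i - z j) := by
      simp_rw [heval_m]
      rw [Finset.prod_mul_distrib, Finset.prod_const]
      simp
    -- E2
    have e2 : ∏ j, (Φ (m+1)).eval (z j) = SchurA a (m+1) ^ m * ∏ i, ∏ j, (y i - z j) := by
      simp_rw [heval_n]
      rw [Finset.prod_mul_distrib, Finset.prod_const]
      have hswap : ∏ j, ∏ i, (z j - y i) = ∏ i, ∏ j, (y i - z j) := by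
        have h1' : ∀ j : Fin m, ∏ i : Fin (m+1), (z j - y i)
            = (-1)^(m+1) * ∏ i : Fin (m+1), (y i - z j) := by
          intro j
          have : ∀ i : Fin (m+1), (z j - y i) = (-1) * (y i - z j) := fun i => by ring
          simp_rw [this, Finset.prod_mul_distrib, Finset.prod_const]
          simp
        simp_rw [h1', Finset.prod_mul_distrib, Finset.prod_const, ← pow_mul]
        rw [Finset.prod_comm]
        have : ((-1 : ℂ)) ^ ((m+1) * m) = 1 :=
          Even.neg_one_pow (by rw [mul_comm]; exact Nat.even_mul_succ_self m)
        simp [this, Finset.card_univ]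
      rw [hswap]
      simp [Finset.card_univ]
    -- E3
    have e3 : ∏ j, (Φ (m+1)).eval (z j) = (-(c (m+1)))^m * ∏ j, (Φ (m-1)).eval (z j) := by
      have hr := hrec (m+1) (by omega)
      have hr' : Φ (m+1) = (C (a (m+1)) * X + C (b (m+1))) * Φ m - C (c (m+1)) * Φ (m-1) := by
        simpa using hr
      have hper : ∀ j, (Φ (m+1)).eval (z j) = -(c (m+1)) * (Φ (m-1)).eval (z j) := by
        intro j
        rw [hr']
        simp [hroot j]
      simp_rw [hper]
      rw [Finset.prod_mul_distrib, Finset.prod_const]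
      simp [Finset.card_univ]
    -- IH
    have e4 : ∏ j, (Φ (m-1)).eval (z j) = SchurS a c m := IH m (by omega) hm z hzfact
    -- combine
    have hAne : SchurA a (m+1) ^ m ≠ 0 := pow_ne_zero _ (SchurA_ne_zero a ha (m+1))
    apply mul_left_cancel₀ hAne
    calc SchurA a (m+1) ^ m * ∏ i, (Φ m).eval (y i)
        = SchurA a m ^ (m+1) * (SchurA a (m+1) ^ m * ∏ i, ∏ j, (y i - z j)) := by
          rw [e1]; ring
      _ = SchurA a m ^ (m+1) * ∏ j, (Φ (m+1)).eval (z j) := by rw [e2]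
      _ = SchurA a m ^ (m+1) * ((-(c (m+1)))^m * SchurS a c m) := by rw [e3, e4]
      _ = SchurA a (m+1) ^ m * SchurS a c (m+1) := by rw [Srec a c ha m hm]; ring

theorem stmt_5 (a b c : ℕ → ℂ) (Φ : ℕ → Polynomial ℂ)
    (habc : ∀ k, 1 ≤ k → a k ≠ 0 ∧ c k ≠ 0)
    (h0 : Φ 0 = 1) (h1 : Φ 1 = C (a 1) * X + C (b 1))
    (hrec : ∀ m, 2 ≤ m →
      Φ m = (C (a m) * X + C (b m)) * Φ (m - 1) - C (c m) * Φ (m - 2))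
    (n : ℕ) (hn : 1 ≤ n) (y : Fin n → ℂ)
    (hroots : Φ n = C (∏ k ∈ Finset.Icc 1 n, a k) * ∏ i, (X - C (y i))) :
    ∏ i, (Φ (n - 1)).eval (y i) =
      (-1) ^ (n * (n - 1) / 2) *
        ∏ k ∈ Finset.Icc 1 n, a k ^ ((n : ℤ) - 2 * k + 1) * c k ^ (k - 1) := by
  exact key a b c Φ habc h0 h1 hrec n hn y hroots
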